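/- For a matrix chain of length n ≥ 3 and any instance k of positive reals, the penalty of removing all non-essential orderings is strictly less than 1: that is, min over fan-out orderings E_{n,h} (h ∈ {0,...,n}) of T(E_{n,h}, k), divided by min over all orderings A of T(A, k), is strictly less than 2. -/

import Mathlib

/-- Full parenthesisations of the subchain `M_{a+1} ⋯ M_c`. -/
inductive Paren : ℕ → ℕ → Type
  | leaf (i : ℕ) : Paren i (i + 1)
  | node {a b c : ℕ} : Paren a b → Paren b c → Paren a c

/-- The arithmetic cost of a parenthesisation on instance `k`. -/
def Paren.cost (k : ℕ → ℝ) : ∀ {a c : ℕ}, Paren a c → ℝ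
  | _, _, .leaf _ => 0
  | _, _, @Paren.node a b c l r => l.cost k + r.cost k + k a * k b * k c

/-- The cost of the fan-out ordering `E_{n,h}`:
`Σ_{i ∉ {h, h+1 mod n+1}} k_{i-1}·k_i·k_h` (indices mod `n+1`). -/
def fanoutCost (n : ℕ) (k : ℕ → ℝ) (h : Fin (n+1)) : ℝ :=
  ∑ i ∈ Finset.univ \ {h, h + 1}, k ((i - 1 : Fin (n+1)) : ℕ) * k (i : ℕ) * k (h : ℕ)

namespace MCfan

/-- Sum of adjacent-pair products over the subchain `(a, c]`. -/
def E (k : ℕ → ℝ) (a c : ℕ) : ℝ := ∑ i ∈ Finset.Ioc a c, k (i-1) * k i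

/-- Penalty term: positive only for leaves. -/
def pen (μ : ℝ) (k : ℕ → ℝ) : ∀ {a c : ℕ}, Paren a c → ℝ
  | _, _, .leaf i => μ * (k i * k (i+1))
  | _, _, .node _ _ => 0

lemma paren_lt : ∀ {a c : ℕ}, Paren a c → a < c := by
  intro a c P
  induction P with
  | leaf i => omega
  | node l r hl hr => omega

lemma E_split (k : ℕ → ℝ) {a b c : ℕ} (hab : a ≤ b) (hbc : b ≤ c) :
    E k a b + E k b c = E k a c :=
  Finset.sum_Ioc_consecutive _ hab hbc


lemma pen_le {μ : ℝ} {k : ℕ → ℝ} (hμ0 : 0 ≤ μ) {a c : ℕ} (P : Paren a c)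
    (ha : 0 ≤ k a) (hc : 0 ≤ k c) : pen μ k P ≤ μ * (k a * k c) := by
  cases P with
  | leaf i => exact le_refl _
  | node _ _ =>
    show (0:ℝ) ≤ μ * (k a * k c)
    positivity

lemma key {n : ℕ} {k : ℕ → ℝ} {μ : ℝ} (hμ0 : 0 ≤ μ)
    (hk : ∀ i ≤ n, 0 < k i) (hμ : ∀ i ≤ n, μ ≤ k i) :
    ∀ {a c : ℕ} (P : Paren a c), c ≤ n →
      μ * E k a c - pen μ k P ≤ 2 * P.cost k := by
  intro a c P
  induction P with
  | leaf i =>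
    intro h
    have hE : E k i (i+1) = k i * k (i+1) := by
      rw [E, Nat.Ioc_succ_singleton, Finset.sum_singleton, Nat.add_sub_cancel]
    simp [pen, Paren.cost, hE]
  | @node a b c l r ihl ihr =>
    intro hcn
    have hab : a < b := paren_lt l
    have hbc : b < c := paren_lt r
    have hbn : b ≤ n := le_trans hbc.le hcn
    have h1 := ihl hbn
    have h2 := ihr hcn
    have hka : 0 < k a := hk a (by omega)
    have hkb : 0 < k b := hk b hbn
    have hkc : 0 < k c := hk c hcn
    have hμb : μ ≤ k b := hμ b hbn
    have hμc : μ ≤ k c := hμ c hcn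
    have hμa : μ ≤ k a := hμ a (by omega)
    have hpl : pen μ k l ≤ k a * k b * k c := by
      have h3 := pen_le hμ0 l hka.le hkb.le
      nlinarith [mul_le_mul_of_nonneg_right hμc (mul_nonneg hka.le hkb.le)]
    have hpr : pen μ k r ≤ k a * k b * k c := by
      have h3 := pen_le hμ0 r hkb.le hkc.le
      nlinarith [mul_le_mul_of_nonneg_right hμa (mul_nonneg hkb.le hkc.le)]
    have hEs : E k a b + E k b c = E k a c := E_split k hab.le hbc.le
    show μ * E k a c - 0 ≤ 2 * (l.cost k + r.cost k + k a * k b * k c)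
    rw [← hEs]
    nlinarith [h1, h2, hpl, hpr]

lemma key2 {n : ℕ} {k : ℕ → ℝ} {μ : ℝ} (hμ0 : 0 ≤ μ)
    (hk : ∀ i ≤ n, 0 < k i) (hμ : ∀ i ≤ n, μ ≤ k i) :
    ∀ {a c : ℕ} (P : Paren a c), a + 3 ≤ c → c ≤ n →
      μ * (E k a c + k a * k c) ≤ 2 * P.cost k := by
  intro a c P
  cases P with
  | leaf i => intro hac _; omega
  | @node a b c l r =>
    intro hac hcn
    have hab : a < b := paren_lt l
    have hbc : b < c := paren_lt r
    have hbn : b ≤ n := le_trans hbc.le hcn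
    have h1 := key hμ0 hk hμ l hbn
    have h2 := key hμ0 hk hμ r hcn
    have hka : 0 < k a := hk a (by omega)
    have hkb : 0 < k b := hk b hbn
    have hkc : 0 < k c := hk c hcn
    have hμb : μ ≤ k b := hμ b hbn
    have hμc : μ ≤ k c := hμ c hcn
    have hμa : μ ≤ k a := hμ a (by omega)
    have hpl : pen μ k l ≤ μ * (k a * k b) := pen_le hμ0 l hka.le hkb.le
    have hpr : pen μ k r ≤ μ * (k b * k c) := pen_le hμ0 r hkb.le hkc.le
    have hor : pen μ k l = 0 ∨ pen μ k r = 0 := by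
      cases l with
      | leaf i =>
        cases r with
        | leaf j => omega
        | node _ _ => exact Or.inr rfl
      | node _ _ => exact Or.inl rfl
    have eac : μ * (k a * k c) ≤ k a * k b * k c := by
      nlinarith [mul_le_mul_of_nonneg_right hμb (mul_nonneg hka.le hkc.le)]
    have eab : μ * (k a * k b) ≤ k a * k b * k c := by
      nlinarith [mul_le_mul_of_nonneg_right hμc (mul_nonneg hka.le hkb.le)]
    have ebc : μ * (k b * k c) ≤ k a * k b * k c := by
      nlinarith [mul_le_mul_of_nonneg_right hμa (mul_nonneg hkb.le hkc.le)]
    have hkey : pen μ k l + pen μ k r + μ * (k a * k c) ≤ 2 * (k a * k b * k c) := by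
      rcases hor with h0 | h0 <;> rw [h0] <;> linarith
    have hEs : E k a b + E k b c = E k a c := E_split k hab.le hbc.le
    show μ * (E k a c + k a * k c) ≤ 2 * (l.cost k + r.cost k + k a * k b * k c)
    rw [← hEs]
    nlinarith [h1, h2, hkey]

lemma E_range (k : ℕ → ℝ) (n : ℕ) :
    E k 0 n = ∑ i ∈ Finset.range n, k i * k (i+1) := by
  rw [E, ← Finset.Ico_add_one_add_one_eq_Ioc, Finset.sum_Ico_eq_sum_range]
  refine Finset.sum_congr (by norm_num) fun i _ => ?_
  have h1 : 0 + 1 + i - 1 = i := by omega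
  have h2 : 0 + 1 + i = i + 1 := by omega
  rw [h1, h2]

lemma fullsum {n : ℕ} (k : ℕ → ℝ) :
    ∑ i : Fin (n+1), k ((i - 1 : Fin (n+1)) : ℕ) * k (i : ℕ)
      = k n * k 0 + E k 0 n := by
  rw [Fin.sum_univ_succ]
  have h0 : (((0 : Fin (n+1)) - 1 : Fin (n+1)) : ℕ) = n := by
    rw [zero_sub, Fin.coe_neg_one]
  have hs : ∀ i : Fin n, ((i.succ - (1 : Fin (n+1)) : Fin (n+1)) : ℕ) = (i : ℕ) := by
    intro i
    rw [Fin.sub_def]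
    show ((n + 1 - ((1 : Fin (n+1)) : ℕ)) + (i + 1)) % (n+1) = (i : ℕ)
    have h1 : ((1 : Fin (n+1)) : ℕ) = 1 % (n+1) := Fin.val_one' (n+1)
    have hin : (i : ℕ) < n := i.isLt
    have h2 : (1 : ℕ) % (n+1) = 1 := Nat.mod_eq_of_lt (by omega)
    rw [h1, h2]
    have h3 : n + 1 - 1 + ((i : ℕ) + 1) = (i : ℕ) + (n + 1) := by omega
    rw [h3, Nat.add_mod_right]
    exact Nat.mod_eq_of_lt (by omega)
  have hcoe : ∀ i : Fin n, ((i.succ : Fin (n+1)) : ℕ) = (i : ℕ) + 1 := fun i => rfl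
  have : ∑ i : Fin n, k ((i.succ - 1 : Fin (n+1)) : ℕ) * k ((i.succ : Fin (n+1)) : ℕ)
      = ∑ i : Fin n, k (i : ℕ) * k ((i : ℕ) + 1) := by
    refine Finset.sum_congr rfl fun i _ => ?_
    rw [hs i, hcoe i]
  rw [this, h0, E_range, Fin.sum_univ_eq_sum_range (fun j => k j * k (j+1)) n]
  norm_num

end MCfan

/-- The minimum over the fan-out orderings `E_{n,h}` of their cost is strictly
less than twice the minimum cost over all orderings: the penalty of removing
all non-essential orderings is strictly less than `1`. -/
theorem min_fanout_lt_two_min_all (n : ℕ) (hn : 3 ≤ n) (k : ℕ → ℝ)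
    (hk : ∀ i ≤ n, 0 < k i)
    (A : Paren 0 n) (hopt : ∀ B : Paren 0 n, A.cost k ≤ B.cost k) :
    (Finset.univ.inf' Finset.univ_nonempty (fanoutCost n k)) < 2 * A.cost k := by
  classical
  obtain ⟨m, -, hm⟩ := Finset.exists_min_image Finset.univ
    (fun i : Fin (n+1) => k (i : ℕ)) Finset.univ_nonempty
  have hmn : (m : ℕ) ≤ n := Nat.lt_succ_iff.mp m.isLt
  have hμpos : 0 < k (m : ℕ) := hk _ hmn
  have hμle : ∀ i ≤ n, k (m : ℕ) ≤ k i := fun i hi =>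
    hm ⟨i, Nat.lt_succ_of_le hi⟩ (Finset.mem_univ _)
  have hfull := MCfan.fullsum (n := n) k
  have hkey := MCfan.key2 hμpos.le hk hμle A (by omega) le_rfl
  have hsub : (∑ i ∈ Finset.univ \ ({m, m+1} : Finset (Fin (n+1))),
        k ((i - 1 : Fin (n+1)) : ℕ) * k (i : ℕ))
      < ∑ i : Fin (n+1), k ((i - 1 : Fin (n+1)) : ℕ) * k (i : ℕ) := by
    apply Finset.sum_lt_sum_of_subset Finset.sdiff_subset (Finset.mem_univ m)
    · simp
    · have h1 : 0 < k (((m - 1 : Fin (n+1)) : ℕ)) := hk _ (Nat.lt_succ_iff.mp (m-1).isLt)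
      positivity
    · intro j _ _
      have h1 : 0 < k (((j - 1 : Fin (n+1)) : ℕ)) := hk _ (Nat.lt_succ_iff.mp (j-1).isLt)
      have h2 : 0 < k ((j : ℕ)) := hk _ (Nat.lt_succ_iff.mp j.isLt)
      positivity
  have hstep : fanoutCost n k m < 2 * A.cost k := by
    calc fanoutCost n k m
        = (∑ i ∈ Finset.univ \ ({m, m+1} : Finset (Fin (n+1))),
            k ((i - 1 : Fin (n+1)) : ℕ) * k (i : ℕ)) * k (m : ℕ) := by
          rw [fanoutCost, Finset.sum_mul]
      _ < (∑ i : Fin (n+1), k ((i - 1 : Fin (n+1)) : ℕ) * k (i : ℕ)) * k (m : ℕ) :=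
          mul_lt_mul_of_pos_right hsub hμpos
      _ = k (m : ℕ) * (MCfan.E k 0 n + k 0 * k n) := by rw [hfull]; ring
      _ ≤ 2 * A.cost k := hkey
  exact lt_of_le_of_lt (Finset.inf'_le _ (Finset.mem_univ m)) hstep
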